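/- Second-moment bound for the mini-batch one-point gradient estimator (Lemma 3). Suppose there is σ ≥ 0 such that for every y ∈ ℝ^d the function f(y,·) is square-integrable with respect to D(y) and ∫_Ξ (F(y) − f(y,ξ))² dD(y)(ξ) ≤ σ² (Assumption 1), and suppose F is H_F-smooth. Then for every x ∈ ℝ^d, μ > 0, c ∈ ℝ and every integer m ≥ 1, ∫_{ℝ^d} ∫_{Ξ^m} ‖ (1/m) · Σ_{j=1}^{m} ((f(x+μ·u, ξⱼ) − c)/μ)·u ‖² d(D(x+μ·u))^{⊗m}(ξ₁,…,ξ_m) dγ(u) ≤ (3/2)·μ²·H_F²·(d+6)³ + 6·(d+4)·‖∇F(x)‖² + 3·σ²·d/(μ²·m) + 3·d·(F(x) − c)²/μ², where (D(y))^{⊗m} denotes the m-fold product measure (i.i.d. samples from D(y)). -/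

import Mathlib

open MeasureTheory ProbabilityTheory

/-- The standard Gaussian measure on `EuclideanSpace ℝ (Fin d)`, i.e. the `d`-fold
product of the standard Gaussian measure `N(0,1)` on `ℝ`. -/
noncomputable def stdGaussian (d : ℕ) : Measure (EuclideanSpace ℝ (Fin d)) :=
  (Measure.pi fun _ : Fin d => gaussianReal 0 1).map
    (MeasurableEquiv.toLp 2 (Fin d → ℝ))

noncomputable section
namespace OnePointAux
open Real Filter




/-- exponent helper -/
local notation "gexp" => fun x : ℝ => Real.exp (-(2⁻¹ : ℝ) * x ^ 2)

lemma pdf_eq (x : ℝ) : gaussianPDFReal 0 1 x = (√(2 * π))⁻¹ * Real.exp (-(2⁻¹:ℝ) * x ^ 2) := by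
  simp only [gaussianPDFReal, NNReal.coe_one, mul_one, sub_zero]
  rw [show -x ^ 2 / 2 = -(2⁻¹:ℝ) * x ^ 2 by ring]

lemma integral_gaussianReal (g : ℝ → ℝ) :
    ∫ x, g x ∂(gaussianReal 0 1) = ∫ x, gaussianPDFReal 0 1 x * g x := by
  rw [gaussianReal_of_var_ne_zero 0 one_ne_zero, gaussianPDF_def]
  have hmeas : Measurable fun x => (gaussianPDFReal 0 1 x).toNNReal :=
    (measurable_gaussianPDFReal 0 1).real_toNNReal
  simp_rw [ENNReal.ofReal]
  rw [integral_withDensity_eq_integral_smul hmeas]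
  congr 1 with x
  rw [NNReal.smul_def, smul_eq_mul, Real.coe_toNNReal _ (gaussianPDFReal_nonneg 0 1 x)]

lemma integrable_pow_mul_gexp (k : ℕ) :
    Integrable (fun x : ℝ => x ^ k * Real.exp (-(2⁻¹:ℝ) * x ^ 2)) := by
  have h := integrable_rpow_mul_exp_neg_mul_sq (b := 2⁻¹) (by norm_num)
      (s := (k : ℝ)) (lt_of_lt_of_le neg_one_lt_zero (Nat.cast_nonneg k))
  simpa [Real.rpow_natCast] using h

lemma integrable_pow_gaussianReal (k : ℕ) :
    Integrable (fun x : ℝ => x ^ k) (gaussianReal 0 1) := by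
  rw [gaussianReal_of_var_ne_zero 0 one_ne_zero, gaussianPDF_def]
  have hmeas : Measurable fun x => (gaussianPDFReal 0 1 x).toNNReal :=
    (measurable_gaussianPDFReal 0 1).real_toNNReal
  simp_rw [ENNReal.ofReal]
  rw [integrable_withDensity_iff_integrable_smul hmeas]
  have heq : (fun x : ℝ => (gaussianPDFReal 0 1 x).toNNReal • (x ^ k : ℝ))
      = fun x : ℝ => (√(2 * π))⁻¹ * (x ^ k * Real.exp (-(2⁻¹:ℝ) * x ^ 2)) := by
    funext x
    rw [NNReal.smul_def, smul_eq_mul, Real.coe_toNNReal _ (gaussianPDFReal_nonneg 0 1 x), pdf_eq]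
    ring
  rw [heq]
  exact (integrable_pow_mul_gexp k).const_mul _

/-- The raw integrals J k -/
def J (k : ℕ) : ℝ := ∫ x : ℝ, x ^ k * Real.exp (-(2⁻¹:ℝ) * x ^ 2)

lemma tendsto_pow_mul_gexp (k : ℕ) (l : Filter ℝ) (hl : l ≤ Filter.cocompact ℝ) :
    Filter.Tendsto (fun x : ℝ => x ^ k * Real.exp (-(2⁻¹:ℝ) * x ^ 2)) l (nhds 0) := by
  apply squeeze_zero_norm (a := fun x : ℝ => |x| ^ (k : ℝ) * Real.exp (-(2⁻¹:ℝ) * x ^ 2))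
  · intro x
    rw [norm_mul, norm_pow, Real.norm_eq_abs, Real.rpow_natCast,
      Real.norm_eq_abs, abs_of_pos (Real.exp_pos _)]
  · exact (tendsto_rpow_abs_mul_exp_neg_mul_sq_cocompact (by norm_num) _).mono_left hl

lemma J_rec (k : ℕ) : J (k + 2) = (k + 1) * J k := by
  set f : ℝ → ℝ := fun x => x ^ (k + 1) * Real.exp (-(2⁻¹:ℝ) * x ^ 2) with hf
  set f' : ℝ → ℝ := fun x =>
    ((k : ℝ) + 1) * (x ^ k * Real.exp (-(2⁻¹:ℝ) * x ^ 2))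
      - x ^ (k + 2) * Real.exp (-(2⁻¹:ℝ) * x ^ 2) with hf'
  have hderiv : ∀ x : ℝ, HasDerivAt f (f' x) x := by
    intro x
    have h1 : HasDerivAt (fun x : ℝ => x ^ (k + 1)) (((k : ℝ) + 1) * x ^ k) x := by
      simpa using hasDerivAt_pow (k + 1) x
    have h2 : HasDerivAt (fun x : ℝ => Real.exp (-(2⁻¹:ℝ) * x ^ 2))
        (Real.exp (-(2⁻¹:ℝ) * x ^ 2) * (-(2⁻¹:ℝ) * (2 * x))) x := by
      have hx : HasDerivAt (fun x : ℝ => -(2⁻¹:ℝ) * x ^ 2) (-(2⁻¹:ℝ) * (2 * x)) x := by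
        simpa using ((hasDerivAt_pow 2 x).const_mul (-(2⁻¹:ℝ)))
      exact hx.exp
    have : HasDerivAt (fun y : ℝ => y ^ (k + 1) * Real.exp (-(2⁻¹:ℝ) * y ^ 2)) _ x := h1.mul h2
    convert this using 1
    simp [hf']
    ring
  have hint : Integrable f' := by
    exact (((integrable_pow_mul_gexp k).const_mul _).sub (integrable_pow_mul_gexp (k + 2)))
  have h0 : ∫ x, f' x = 0 - 0 := by
    refine integral_of_hasDerivAt_of_tendsto hderiv hint ?_ ?_
    · exact tendsto_pow_mul_gexp (k+1) _ (by rw [cocompact_eq_atBot_atTop]; exact le_sup_left)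
    · exact tendsto_pow_mul_gexp (k+1) _ (by rw [cocompact_eq_atBot_atTop]; exact le_sup_right)
  rw [sub_zero] at h0
  have h1 : ∫ x, f' x = ((k : ℝ) + 1) * J k - J (k + 2) := by
    simp only [hf']
    rw [integral_sub ((integrable_pow_mul_gexp k).const_mul _)
      (integrable_pow_mul_gexp (k + 2)), integral_const_mul]
    rfl
  have : J (k + 2) = ((k : ℝ) + 1) * J k := by linarith [h1.symm.trans h0]
  simpa using this

lemma J_zero : J 0 = √(2 * π) := by
  unfold J
  simp only [pow_zero, one_mul]
  have := integral_gaussian (2⁻¹ : ℝ)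
  have h2 : (π / 2⁻¹ : ℝ) = 2 * π := by ring
  simpa [h2] using this

lemma J_one : J 1 = 0 := by
  set f : ℝ → ℝ := fun x => -Real.exp (-(2⁻¹:ℝ) * x ^ 2) with hf
  have hderiv : ∀ x : ℝ, HasDerivAt f (x ^ 1 * Real.exp (-(2⁻¹:ℝ) * x ^ 2)) x := by
    intro x
    have hx : HasDerivAt (fun x : ℝ => -(2⁻¹:ℝ) * x ^ 2) (-(2⁻¹:ℝ) * (2 * x)) x := by
      simpa using ((hasDerivAt_pow 2 x).const_mul (-(2⁻¹:ℝ)))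
    have : HasDerivAt (fun y : ℝ => -Real.exp (-(2⁻¹:ℝ) * y ^ 2)) _ x := (hx.exp).neg
    convert this using 1
    ring
  have h0 := integral_of_hasDerivAt_of_tendsto hderiv (integrable_pow_mul_gexp 1)
    (by
      have := (tendsto_pow_mul_gexp 0 Filter.atBot
        (by rw [cocompact_eq_atBot_atTop]; exact le_sup_left)).neg
      simpa [hf] using this)
    (by
      have := (tendsto_pow_mul_gexp 0 Filter.atTop
        (by rw [cocompact_eq_atBot_atTop]; exact le_sup_right)).neg
      simpa [hf] using this)
  unfold J
  simpa using h0

/-- moments of the standard gaussian -/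
def M (k : ℕ) : ℝ := ∫ x, x ^ k ∂(gaussianReal 0 1)

lemma M_eq (k : ℕ) : M k = (√(2 * π))⁻¹ * J k := by
  unfold M J
  rw [integral_gaussianReal]
  simp_rw [pdf_eq]
  rw [← integral_const_mul]
  congr 1 with x
  ring

lemma sqrt_two_pi_pos : (0:ℝ) < √(2 * π) := Real.sqrt_pos.mpr (by positivity)

lemma M_zero : M 0 = 1 := by
  rw [M_eq, J_zero]
  field_simp

lemma M_one : M 1 = 0 := by rw [M_eq, J_one, mul_zero]

lemma M_two : M 2 = 1 := by
  rw [M_eq, show (2:ℕ) = 0 + 2 from rfl, J_rec, J_zero]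
  simp
  field_simp

lemma M_three : M 3 = 0 := by
  rw [M_eq, show (3:ℕ) = 1 + 2 from rfl, J_rec, J_one]
  simp

lemma M_four : M 4 = 3 := by
  rw [M_eq, show J 4 = J (2 + 2) from rfl, J_rec, show J 2 = J (0 + 2) from rfl, J_rec, J_zero]
  push_cast
  field_simp
  ring

lemma M_six : M 6 = 15 := by
  rw [M_eq, show J 6 = J (4 + 2) from rfl, J_rec, show J 4 = J (2 + 2) from rfl, J_rec,
    show J 2 = J (0 + 2) from rfl, J_rec, J_zero]
  push_cast
  field_simp
  ring




variable {E : Type*} [MeasurableSpace E]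

lemma integral_pi_prod (μ : Measure E) [SigmaFinite μ] {n : ℕ} (f : Fin n → E → ℝ) :
    ∫ x, ∏ i, f i (x i) ∂(Measure.pi fun _ : Fin n => μ) = ∏ i, ∫ y, f i y ∂μ := by
  letI : MeasureSpace E := ⟨μ⟩
  have h : (Measure.pi fun _ : Fin n => μ) = (volume : Measure (Fin n → E)) :=
    (volume_pi).symm
  rw [h]
  exact MeasureTheory.integral_fintype_prod_volume_eq_prod f

lemma integrable_pi_prod (μ : Measure E) [SigmaFinite μ] {n : ℕ} {f : Fin n → E → ℝ}
    (hf : ∀ i, Integrable (f i) μ) :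
    Integrable (fun x => ∏ i, f i (x i)) (Measure.pi fun _ : Fin n => μ) := by
  letI : MeasureSpace E := ⟨μ⟩
  have h : (Measure.pi fun _ : Fin n => μ) = (volume : Measure (Fin n → E)) :=
    (volume_pi).symm
  rw [h]
  exact MeasureTheory.Integrable.fintype_prod hf

lemma piFinSuccAbove_symm_cons {n : ℕ} (p : E × (Fin n → E)) :
    ((MeasurableEquiv.piFinSuccAbove (fun _ : Fin (n+1) => E) 0).symm p) = Fin.cons p.1 p.2 := by
  funext i
  rw [MeasurableEquiv.piFinSuccAbove_symm_apply]
  refine Fin.cases ?_ (fun j => ?_) i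
  · simp [Fin.insertNthEquiv]
  · simp [Fin.insertNthEquiv, Fin.zero_succAbove]

lemma integral_pi_succ (μ : Measure E) [SigmaFinite μ] {n : ℕ} (φ : (Fin (n+1) → E) → ℝ) :
    ∫ x, φ x ∂(Measure.pi fun _ : Fin (n+1) => μ)
      = ∫ p : E × (Fin n → E), φ (Fin.cons p.1 p.2)
          ∂(μ.prod (Measure.pi fun _ : Fin n => μ)) := by
  rw [← ((measurePreserving_piFinSuccAbove (fun _ : Fin (n+1) => μ) 0).symm).integral_comp' φ]
  congr 1 with p
  rw [piFinSuccAbove_symm_cons]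

lemma integrable_pi_succ_iff (μ : Measure E) [SigmaFinite μ] {n : ℕ} (φ : (Fin (n+1) → E) → ℝ) :
    Integrable φ (Measure.pi fun _ : Fin (n+1) => μ)
      ↔ Integrable (fun p : E × (Fin n → E) => φ (Fin.cons p.1 p.2))
          (μ.prod (Measure.pi fun _ : Fin n => μ)) := by
  rw [← ((measurePreserving_piFinSuccAbove (fun _ : Fin (n+1) => μ) 0).symm).integrable_comp_emb
    (MeasurableEquiv.measurableEmbedding _)]
  constructor <;> intro h <;> [skip; skip] <;>
    · refine h.congr ?_
      filter_upwards with p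
      simp [Function.comp, piFinSuccAbove_symm_cons]

lemma prod_ite_two {M : Type*} [CommMonoid M] {n : ℕ} (i j : Fin n) (hij : i ≠ j)
    (a b : Fin n → M) :
    (∏ l, (if l = i then a l else if l = j then b l else 1)) = a i * b j := by
  rw [← Finset.mul_prod_erase Finset.univ _ (Finset.mem_univ i), if_pos rfl]
  congr 1
  rw [← Finset.mul_prod_erase _ _
    (Finset.mem_erase.mpr ⟨hij.symm, Finset.mem_univ j⟩), if_neg hij.symm, if_pos rfl]
  rw [Finset.prod_eq_one, mul_one]
  intro l hl
  rw [Finset.mem_erase, Finset.mem_erase] at hl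
  rw [if_neg hl.2.1, if_neg hl.1]

variable (ν : Measure E) [IsProbabilityMeasure ν]

lemma integral_eval {n : ℕ} (b : E → ℝ) (i : Fin n) :
    ∫ x, b (x i) ∂(Measure.pi fun _ : Fin n => ν) = ∫ y, b y ∂ν := by
  have h1 : (fun x : Fin n → E => b (x i))
      = fun x => ∏ l, (if l = i then b (x l) else 1) := by
    funext x
    rw [Finset.prod_ite_eq' Finset.univ i (fun l => b (x l))]
    simp
  have h2 : ∫ x : Fin n → E, ∏ l, (if l = i then b (x l) else 1)
        ∂(Measure.pi fun _ : Fin n => ν)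
      = ∏ l : Fin n, ∫ y, (if l = i then b y else 1) ∂ν :=
    integral_pi_prod ν (fun l t => if l = i then b t else 1)
  rw [h1, h2]
  rw [Finset.prod_congr rfl (g := fun l => if l = i then ∫ y, b y ∂ν else 1)
    (fun l _ => by by_cases h : l = i <;> simp [h]),
    Finset.prod_ite_eq' Finset.univ i (fun _ => ∫ y, b y ∂ν)]
  simp

lemma integrable_eval {n : ℕ} (b : E → ℝ) (hb : Integrable b ν) (i : Fin n) :
    Integrable (fun x => b (x i)) (Measure.pi fun _ : Fin n => ν) := by
  have h1 : (fun x : Fin n → E => b (x i))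
      = fun x => ∏ l, (if l = i then b (x l) else 1) := by
    funext x
    rw [Finset.prod_ite_eq' Finset.univ i (fun l => b (x l))]
    simp
  rw [h1]
  exact integrable_pi_prod ν (f := fun l t => if l = i then b t else 1) fun l => by
    by_cases h : l = i <;> simp [h, hb, integrable_const]

lemma integral_eval_mul_eval {n : ℕ} (b : E → ℝ) (hb : Integrable b ν)
    {i j : Fin n} (hij : i ≠ j) :
    ∫ x, b (x i) * b (x j) ∂(Measure.pi fun _ : Fin n => ν) = (∫ y, b y ∂ν) ^ 2 := by
  have h1 : (fun x : Fin n → E => b (x i) * b (x j))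
      = fun x => ∏ l, (if l = i then b (x l) else if l = j then b (x l) else 1) := by
    funext x
    rw [prod_ite_two i j hij (fun l => b (x l)) (fun l => b (x l))]
  have h2 : ∫ x : Fin n → E, ∏ l, (if l = i then b (x l) else if l = j then b (x l) else 1)
        ∂(Measure.pi fun _ : Fin n => ν)
      = ∏ l : Fin n, ∫ y, (if l = i then b y else if l = j then b y else 1) ∂ν :=
    integral_pi_prod ν (fun l t => if l = i then b t else if l = j then b t else 1)
  rw [h1, h2]
  rw [Finset.prod_congr rfl
    (g := fun l => if l = i then ∫ y, b y ∂ν else if l = j then ∫ y, b y ∂ν else 1)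
    (fun l _ => by by_cases h : l = i; · simp [h]
                   by_cases h' : l = j <;> simp [h, h']),
    prod_ite_two i j hij (fun _ => ∫ y, b y ∂ν) (fun _ => ∫ y, b y ∂ν), sq]

lemma integrable_eval_mul_eval {n : ℕ} (b : E → ℝ) (hb : Integrable b ν)
    (hb2 : Integrable (fun y => b y * b y) ν) (i j : Fin n) :
    Integrable (fun x => b (x i) * b (x j)) (Measure.pi fun _ : Fin n => ν) := by
  by_cases hij : i = j
  · subst hij
    exact integrable_eval ν (fun y => b y * b y) hb2 i
  · have h1 : (fun x : Fin n → E => b (x i) * b (x j))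
        = fun x => ∏ l, (if l = i then b (x l) else if l = j then b (x l) else 1) := by
      funext x
      rw [prod_ite_two i j hij (fun l => b (x l)) (fun l => b (x l))]
    rw [h1]
    exact integrable_pi_prod ν
      (f := fun l t => if l = i then b t else if l = j then b t else 1) fun l => by
      by_cases h : l = i; · simp [h, hb]
      by_cases h' : l = j <;> simp [h, h', hb, integrable_const]

lemma integral_sum_eval_sq {m : ℕ} (b : E → ℝ) (hb : Integrable b ν)
    (hb2 : Integrable (fun y => b y * b y) ν) :
    ∫ x, (∑ j : Fin m, b (x j)) ^ 2 ∂(Measure.pi fun _ : Fin m => ν)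
      = m * ∫ y, b y * b y ∂ν + ((m : ℝ) ^ 2 - m) * (∫ y, b y ∂ν) ^ 2 := by
  have hexp : ∀ x : Fin m → E, (∑ j : Fin m, b (x j)) ^ 2
      = ∑ i : Fin m, ∑ j : Fin m, b (x i) * b (x j) := by
    intro x
    rw [sq, Finset.sum_mul_sum]
  simp_rw [hexp]
  rw [integral_finset_sum _ (fun i _ => integrable_finset_sum _
    (fun j _ => integrable_eval_mul_eval ν b hb hb2 i j))]
  have : ∀ i : Fin m, ∫ x, ∑ j : Fin m, b (x i) * b (x j)
      ∂(Measure.pi fun _ : Fin m => ν)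
      = ∑ j : Fin m, ∫ x, b (x i) * b (x j) ∂(Measure.pi fun _ : Fin m => ν) :=
    fun i => integral_finset_sum _ (fun j _ => integrable_eval_mul_eval ν b hb hb2 i j)
  simp_rw [this]
  have hval : ∀ i j : Fin m, ∫ x, b (x i) * b (x j) ∂(Measure.pi fun _ : Fin m => ν)
      = (∫ y, b y ∂ν) ^ 2 + if i = j then (∫ y, b y * b y ∂ν - (∫ y, b y ∂ν) ^ 2) else 0 := by
    intro i j
    by_cases hij : i = j
    · subst hij
      rw [if_pos rfl, integral_eval ν (fun y => b y * b y) i]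
      ring
    · rw [if_neg hij, integral_eval_mul_eval ν b hb hij, add_zero]
  simp_rw [hval, Finset.sum_add_distrib, Finset.sum_ite_eq, Finset.sum_const,
    Finset.card_univ, Fintype.card_fin]
  simp only [Finset.mem_univ, if_pos, nsmul_eq_mul, sq]
  rw [Finset.sum_const, Finset.card_univ, Fintype.card_fin, nsmul_eq_mul]
  ring

abbrev gpi (n : ℕ) : Measure (Fin n → ℝ) := Measure.pi fun _ : Fin n => gaussianReal 0 1

def Qf (n : ℕ) (x : Fin n → ℝ) : ℝ := ∑ i, (x i) ^ 2

def Sf {n : ℕ} (g : Fin n → ℝ) (x : Fin n → ℝ) : ℝ := ∑ i, g i * x i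

lemma Qf_cons {n : ℕ} (a : ℝ) (y : Fin n → ℝ) :
    Qf (n+1) (Fin.cons a y) = a ^ 2 + Qf n y := by
  simp [Qf, Fin.sum_univ_succ]

lemma Sf_cons {n : ℕ} (g : Fin (n+1) → ℝ) (a : ℝ) (y : Fin n → ℝ) :
    Sf g (Fin.cons a y) = g 0 * a + Sf (Fin.tail g) y := by
  simp [Sf, Fin.sum_univ_succ, Fin.tail]

lemma integral_add3 {α : Type*} [MeasurableSpace α] {μ : Measure α} {f1 f2 f3 : α → ℝ}
    (h1 : Integrable f1 μ) (h2 : Integrable f2 μ) (h3 : Integrable f3 μ) :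
    ∫ x, (f1 x + f2 x + f3 x) ∂μ = ∫ x, f1 x ∂μ + ∫ x, f2 x ∂μ + ∫ x, f3 x ∂μ := by
  have key := integral_add (h1.add h2) h3
  simp only [Pi.add_apply] at key
  rw [key, integral_add h1 h2]

lemma integral_add4 {α : Type*} [MeasurableSpace α] {μ : Measure α} {f1 f2 f3 f4 : α → ℝ}
    (h1 : Integrable f1 μ) (h2 : Integrable f2 μ) (h3 : Integrable f3 μ)
    (h4 : Integrable f4 μ) :
    ∫ x, (f1 x + f2 x + f3 x + f4 x) ∂μ
      = ∫ x, f1 x ∂μ + ∫ x, f2 x ∂μ + ∫ x, f3 x ∂μ + ∫ x, f4 x ∂μ := by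
  have key := integral_add ((h1.add h2).add h3) h4
  simp only [Pi.add_apply] at key
  rw [key, integral_add3 h1 h2 h3]

lemma integral_add5 {α : Type*} [MeasurableSpace α] {μ : Measure α} {f1 f2 f3 f4 f5 : α → ℝ}
    (h1 : Integrable f1 μ) (h2 : Integrable f2 μ) (h3 : Integrable f3 μ)
    (h4 : Integrable f4 μ) (h5 : Integrable f5 μ) :
    ∫ x, (f1 x + f2 x + f3 x + f4 x + f5 x) ∂μ
      = ∫ x, f1 x ∂μ + ∫ x, f2 x ∂μ + ∫ x, f3 x ∂μ + ∫ x, f4 x ∂μ + ∫ x, f5 x ∂μ := by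
  have key := integral_add (((h1.add h2).add h3).add h4) h5
  simp only [Pi.add_apply] at key
  rw [key, integral_add4 h1 h2 h3 h4]

lemma integral_add6 {α : Type*} [MeasurableSpace α] {μ : Measure α}
    {f1 f2 f3 f4 f5 f6 : α → ℝ}
    (h1 : Integrable f1 μ) (h2 : Integrable f2 μ) (h3 : Integrable f3 μ)
    (h4 : Integrable f4 μ) (h5 : Integrable f5 μ) (h6 : Integrable f6 μ) :
    ∫ x, (f1 x + f2 x + f3 x + f4 x + f5 x + f6 x) ∂μ
      = ∫ x, f1 x ∂μ + ∫ x, f2 x ∂μ + ∫ x, f3 x ∂μ + ∫ x, f4 x ∂μ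
        + ∫ x, f5 x ∂μ + ∫ x, f6 x ∂μ := by
  have key := integral_add ((((h1.add h2).add h3).add h4).add h5) h6
  simp only [Pi.add_apply] at key
  rw [key, integral_add5 h1 h2 h3 h4 h5]

lemma integral_one_gpi (n : ℕ) : ∫ _x, (1:ℝ) ∂gpi n = 1 := by simp

lemma ipm_pow {n : ℕ} (k : ℕ) (r : ℝ) (ψ : (Fin n → ℝ) → ℝ) :
    ∫ p : ℝ × (Fin n → ℝ), (r * p.1 ^ k) * ψ p.2 ∂((gaussianReal 0 1).prod (gpi n))
      = r * M k * ∫ y, ψ y ∂gpi n := by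
  have h : ∫ p : ℝ × (Fin n → ℝ), (r * p.1 ^ k) * ψ p.2 ∂((gaussianReal 0 1).prod (gpi n))
      = (∫ a, r * a ^ k ∂(gaussianReal 0 1)) * ∫ y, ψ y ∂gpi n :=
    integral_prod_mul (fun a => r * a ^ k) ψ
  rw [h, integral_const_mul]
  unfold M
  ring

lemma int_pm {n : ℕ} (k : ℕ) (r : ℝ) {ψ : (Fin n → ℝ) → ℝ} (hψ : Integrable ψ (gpi n)) :
    Integrable (fun p : ℝ × (Fin n → ℝ) => (r * p.1 ^ k) * ψ p.2)
      ((gaussianReal 0 1).prod (gpi n)) :=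
  ((integrable_pow_gaussianReal k).const_mul r).mul_prod hψ

lemma Q_moments (n : ℕ) :
    Integrable (Qf n) (gpi n) ∧ Integrable (fun x => Qf n x ^ 2) (gpi n) ∧
    Integrable (fun x => Qf n x ^ 3) (gpi n) ∧
    (∫ x, Qf n x ∂gpi n = n) ∧ (∫ x, Qf n x ^ 2 ∂gpi n = n * (n + 2)) ∧
    (∫ x, Qf n x ^ 3 ∂gpi n = n * (n + 2) * (n + 4)) := by
  induction n with
  | zero =>
    have h : Qf 0 = fun _ => (0:ℝ) := by funext x; simp [Qf]
    refine ⟨?_, ?_, ?_, ?_, ?_, ?_⟩ <;> simp [h]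
  | succ n ih =>
    obtain ⟨hQi, hQ2i, hQ3i, hQ, hQ2, hQ3⟩ := ih
    have hone : Integrable (fun _ : Fin n → ℝ => (1:ℝ)) (gpi n) := integrable_const 1
    have hc1 : (fun p : ℝ × (Fin n → ℝ) => Qf (n+1) (Fin.cons p.1 p.2))
        = fun p => (1 * p.1 ^ 2) * 1 + (1 * p.1 ^ 0) * Qf n p.2 := by
      funext p; rw [Qf_cons]; ring
    have hc2 : (fun p : ℝ × (Fin n → ℝ) => Qf (n+1) (Fin.cons p.1 p.2) ^ 2)
        = fun p => (1 * p.1 ^ 4) * 1 + (2 * p.1 ^ 2) * Qf n p.2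
            + (1 * p.1 ^ 0) * Qf n p.2 ^ 2 := by
      funext p; rw [Qf_cons]; ring
    have hc3 : (fun p : ℝ × (Fin n → ℝ) => Qf (n+1) (Fin.cons p.1 p.2) ^ 3)
        = fun p => (1 * p.1 ^ 6) * 1 + (3 * p.1 ^ 4) * Qf n p.2 + (3 * p.1 ^ 2) * Qf n p.2 ^ 2
            + (1 * p.1 ^ 0) * Qf n p.2 ^ 3 := by
      funext p; rw [Qf_cons]; ring
    have i1 : Integrable (Qf (n+1)) (gpi (n+1)) := by
      rw [integrable_pi_succ_iff, hc1]
      exact (int_pm 2 1 hone).add (int_pm 0 1 hQi)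
    have i2 : Integrable (fun x => Qf (n+1) x ^ 2) (gpi (n+1)) := by
      rw [integrable_pi_succ_iff, show _ from hc2]
      exact ((int_pm 4 1 hone).add (int_pm 2 2 hQi)).add (int_pm 0 1 hQ2i)
    have i3 : Integrable (fun x => Qf (n+1) x ^ 3) (gpi (n+1)) := by
      rw [integrable_pi_succ_iff, show _ from hc3]
      exact (((int_pm 6 1 hone).add (int_pm 4 3 hQi)).add (int_pm 2 3 hQ2i)).add
        (int_pm 0 1 hQ3i)
    have e1 : ∫ x, Qf (n+1) x ∂gpi (n+1) = ((n:ℝ)+1) := by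
      rw [integral_pi_succ, hc1, integral_add (int_pm 2 1 hone) (int_pm 0 1 hQi),
        ipm_pow 2 1 (fun _ => 1), ipm_pow 0 1 (Qf n), integral_one_gpi, hQ,
        M_two, M_zero]
      ring
    have e2 : ∫ x, Qf (n+1) x ^ 2 ∂gpi (n+1) = ((n:ℝ)+1) * ((n:ℝ)+3) := by
      rw [integral_pi_succ, hc2,
        integral_add3 (int_pm 4 1 hone) (int_pm 2 2 hQi) (int_pm 0 1 hQ2i),
        ipm_pow 4 1 (fun _ => 1), ipm_pow 2 2 (Qf n), ipm_pow 0 1 (fun y => Qf n y ^ 2),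
        integral_one_gpi, hQ, hQ2, M_four, M_two, M_zero]
      ring
    have e3 : ∫ x, Qf (n+1) x ^ 3 ∂gpi (n+1) = ((n:ℝ)+1) * ((n:ℝ)+3) * ((n:ℝ)+5) := by
      rw [integral_pi_succ, hc3,
        integral_add4 (int_pm 6 1 hone) (int_pm 4 3 hQi) (int_pm 2 3 hQ2i)
          (int_pm 0 1 hQ3i),
        ipm_pow 6 1 (fun _ => 1), ipm_pow 4 3 (Qf n), ipm_pow 2 3 (fun y => Qf n y ^ 2),
        ipm_pow 0 1 (fun y => Qf n y ^ 3),
        integral_one_gpi, hQ, hQ2, hQ3, M_six, M_four, M_two, M_zero]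
      ring
    refine ⟨i1, i2, i3, ?_, ?_, ?_⟩
    · rw [e1]; push_cast; ring
    · rw [e2]; push_cast; ring
    · rw [e3]; push_cast; ring

lemma S_moments (n : ℕ) (g : Fin n → ℝ) :
    Integrable (Sf g) (gpi n) ∧ Integrable (fun x => Sf g x ^ 2) (gpi n) ∧
    Integrable (fun x => Sf g x * Qf n x) (gpi n) ∧
    Integrable (fun x => Sf g x ^ 2 * Qf n x) (gpi n) ∧
    (∫ x, Sf g x ∂gpi n = 0) ∧ (∫ x, Sf g x ^ 2 ∂gpi n = ∑ i, g i ^ 2) ∧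
    (∫ x, Sf g x * Qf n x ∂gpi n = 0) ∧
    (∫ x, Sf g x ^ 2 * Qf n x ∂gpi n = ((n:ℝ) + 2) * ∑ i, g i ^ 2) := by
  induction n with
  | zero =>
    have h : Sf g = fun _ => (0:ℝ) := by funext x; simp [Sf]
    refine ⟨?_, ?_, ?_, ?_, ?_, ?_, ?_, ?_⟩ <;> simp [h]
  | succ n ih =>
    obtain ⟨hSi, hS2i, hSQi, hS2Qi, hS, hS2, hSQ, hS2Q⟩ := ih (Fin.tail g)
    obtain ⟨hQi, hQ2i, _, hQ, _, _⟩ := Q_moments n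
    have hone : Integrable (fun _ : Fin n → ℝ => (1:ℝ)) (gpi n) := integrable_const 1
    set c := g 0 with hc
    have hc1 : (fun p : ℝ × (Fin n → ℝ) => Sf g (Fin.cons p.1 p.2))
        = fun p => (c * p.1 ^ 1) * 1 + (1 * p.1 ^ 0) * Sf (Fin.tail g) p.2 := by
      funext p; rw [Sf_cons]; ring
    have hc2 : (fun p : ℝ × (Fin n → ℝ) => Sf g (Fin.cons p.1 p.2) ^ 2)
        = fun p => (c ^ 2 * p.1 ^ 2) * 1 + (2 * c * p.1 ^ 1) * Sf (Fin.tail g) p.2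
            + (1 * p.1 ^ 0) * Sf (Fin.tail g) p.2 ^ 2 := by
      funext p; rw [Sf_cons]; ring
    have hc3 : (fun p : ℝ × (Fin n → ℝ) =>
          Sf g (Fin.cons p.1 p.2) * Qf (n+1) (Fin.cons p.1 p.2))
        = fun p => (c * p.1 ^ 3) * 1 + (c * p.1 ^ 1) * Qf n p.2
            + (1 * p.1 ^ 2) * Sf (Fin.tail g) p.2
            + (1 * p.1 ^ 0) * (Sf (Fin.tail g) p.2 * Qf n p.2) := by
      funext p; rw [Sf_cons, Qf_cons]; ring
    have hc4 : (fun p : ℝ × (Fin n → ℝ) =>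
          Sf g (Fin.cons p.1 p.2) ^ 2 * Qf (n+1) (Fin.cons p.1 p.2))
        = fun p => (c ^ 2 * p.1 ^ 4) * 1 + (2 * c * p.1 ^ 3) * Sf (Fin.tail g) p.2
            + (1 * p.1 ^ 2) * Sf (Fin.tail g) p.2 ^ 2
            + (c ^ 2 * p.1 ^ 2) * Qf n p.2
            + (2 * c * p.1 ^ 1) * (Sf (Fin.tail g) p.2 * Qf n p.2)
            + (1 * p.1 ^ 0) * (Sf (Fin.tail g) p.2 ^ 2 * Qf n p.2) := by
      funext p; rw [Sf_cons, Qf_cons]; ring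
    have i1 : Integrable (Sf g) (gpi (n+1)) := by
      rw [integrable_pi_succ_iff, hc1]
      exact (int_pm 1 c hone).add (int_pm 0 1 hSi)
    have i2 : Integrable (fun x => Sf g x ^ 2) (gpi (n+1)) := by
      rw [integrable_pi_succ_iff, show _ from hc2]
      exact ((int_pm 2 (c^2) hone).add (int_pm 1 (2*c) hSi)).add (int_pm 0 1 hS2i)
    have i3 : Integrable (fun x => Sf g x * Qf (n+1) x) (gpi (n+1)) := by
      rw [integrable_pi_succ_iff, show _ from hc3]
      exact (((int_pm 3 c hone).add (int_pm 1 c hQi)).add (int_pm 2 1 hSi)).add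
        (int_pm 0 1 hSQi)
    have i4 : Integrable (fun x => Sf g x ^ 2 * Qf (n+1) x) (gpi (n+1)) := by
      rw [integrable_pi_succ_iff, show _ from hc4]
      exact (((((int_pm 4 (c^2) hone).add (int_pm 3 (2*c) hSi)).add
        (int_pm 2 1 hS2i)).add (int_pm 2 (c^2) hQi)).add
        (int_pm 1 (2*c) hSQi)).add (int_pm 0 1 hS2Qi)
    have hsum : (∑ i, g i ^ 2) = c ^ 2 + ∑ i : Fin n, (Fin.tail g) i ^ 2 := by
      rw [Fin.sum_univ_succ]; simp [Fin.tail, hc]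
    have e1 : ∫ x, Sf g x ∂gpi (n+1) = 0 := by
      rw [integral_pi_succ, hc1, integral_add (int_pm 1 c hone) (int_pm 0 1 hSi),
        ipm_pow 1 c (fun _ => 1), ipm_pow 0 1 (Sf (Fin.tail g)), hS, M_one]
      ring
    have e2 : ∫ x, Sf g x ^ 2 ∂gpi (n+1) = ∑ i, g i ^ 2 := by
      rw [integral_pi_succ, hc2,
        integral_add3 (int_pm 2 (c^2) hone) (int_pm 1 (2*c) hSi) (int_pm 0 1 hS2i),
        ipm_pow 2 (c^2) (fun _ => 1), ipm_pow 1 (2*c) (Sf (Fin.tail g)),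
        ipm_pow 0 1 (fun y => Sf (Fin.tail g) y ^ 2),
        integral_one_gpi, hS, hS2, M_two, M_one, M_zero, hsum]
      ring
    have e3 : ∫ x, Sf g x * Qf (n+1) x ∂gpi (n+1) = 0 := by
      rw [integral_pi_succ, hc3,
        integral_add4 (int_pm 3 c hone) (int_pm 1 c hQi) (int_pm 2 1 hSi)
          (int_pm 0 1 hSQi),
        ipm_pow 3 c (fun _ => 1), ipm_pow 1 c (Qf n), ipm_pow 2 1 (Sf (Fin.tail g)),
        ipm_pow 0 1 (fun y => Sf (Fin.tail g) y * Qf n y),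
        hS, hSQ, M_three, M_one]
      ring
    have e4 : ∫ x, Sf g x ^ 2 * Qf (n+1) x ∂gpi (n+1) = ((n:ℝ) + 3) * ∑ i, g i ^ 2 := by
      rw [integral_pi_succ, hc4,
        integral_add6 (int_pm 4 (c^2) hone) (int_pm 3 (2*c) hSi) (int_pm 2 1 hS2i)
          (int_pm 2 (c^2) hQi) (int_pm 1 (2*c) hSQi) (int_pm 0 1 hS2Qi),
        ipm_pow 4 (c^2) (fun _ => 1), ipm_pow 3 (2*c) (Sf (Fin.tail g)),
        ipm_pow 2 1 (fun y => Sf (Fin.tail g) y ^ 2), ipm_pow 2 (c^2) (Qf n),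
        ipm_pow 1 (2*c) (fun y => Sf (Fin.tail g) y * Qf n y),
        ipm_pow 0 1 (fun y => Sf (Fin.tail g) y ^ 2 * Qf n y),
        integral_one_gpi, hS2, hQ, hSQ, hS2Q, M_four, M_three, M_two, M_one, M_zero, hsum]
      ring
    refine ⟨i1, i2, i3, i4, e1, e2, e3, ?_⟩
    rw [e4, hsum]
    push_cast
    ring
open MeasureTheory ProbabilityTheory Real Filter

lemma taylor_quad_bound {E : Type*} [NormedAddCommGroup E] [InnerProductSpace ℝ E]
    [CompleteSpace E] {F : E → ℝ} {H : ℝ} (hH : 0 ≤ H) (hFdiff : Differentiable ℝ F)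
    (hLip : LipschitzWith H.toNNReal (gradient F)) (x v : E) :
    |F (x + v) - F x - inner ℝ (gradient F x) v| ≤ H / 2 * ‖v‖ ^ 2 := by
  have hgradF : ∀ y : E, HasGradientAt F (gradient F y) y :=
    fun y => (hFdiff y).hasGradientAt
  have hcurve : ∀ t : ℝ, HasDerivAt (fun s : ℝ => x + s • v) v t := by
    intro t
    simpa using ((hasDerivAt_id t).smul_const v).const_add x
  have hφ : ∀ t : ℝ, HasDerivAt (fun s : ℝ => F (x + s • v))
      (inner ℝ (gradient F (x + t • v)) v : ℝ) t := by
    intro t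
    have hF' : HasFDerivAt F (InnerProductSpace.toDual ℝ E (gradient F (x + t • v)))
        (x + t • v) := hasGradientAt_iff_hasFDerivAt.mp (hgradF (x + t • v))
    have := hF'.comp_hasDerivAt t (hcurve t)
    simpa [InnerProductSpace.toDual_apply_apply, Function.comp_def] using this
  set ψ' : ℝ → ℝ := fun t => (inner ℝ (gradient F (x + t • v)) v : ℝ) - inner ℝ (gradient F x) v
    with hψ'
  have hψ : ∀ t : ℝ, HasDerivAt (fun s : ℝ => F (x + s • v) - s * inner ℝ (gradient F x) v)
      (ψ' t) t := by
    intro t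
    have h2 : HasDerivAt (fun s : ℝ => s * (inner ℝ (gradient F x) v : ℝ))
        (inner ℝ (gradient F x) v : ℝ) t := by
      simpa using (hasDerivAt_id t).mul_const (inner ℝ (gradient F x) v : ℝ)
    exact (hφ t).sub h2
  have hcont : Continuous ψ' := by
    have hgc : Continuous (gradient F) := hLip.continuous
    have : Continuous fun t : ℝ => x + t • v := by continuity
    exact ((hgc.comp this).inner continuous_const).sub continuous_const
  have hFTC : ∫ t in (0:ℝ)..1, ψ' t
      = (F (x + v) - F x - inner ℝ (gradient F x) v) := by
    have h2 := intervalIntegral.integral_eq_sub_of_hasDerivAt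
      (f := fun s : ℝ => F (x + s • v) - s * inner ℝ (gradient F x) v)
      (f' := ψ') (fun t _ => hψ t) (hcont.intervalIntegrable 0 1)
    simp only [one_smul, zero_smul, add_zero, zero_mul, sub_zero, one_mul] at h2
    rw [h2]; ring
  have hbound : ∀ t ∈ Set.Icc (0:ℝ) 1, |ψ' t| ≤ H * ‖v‖ ^ 2 * t := by
    intro t ht
    have h1 : ψ' t = inner ℝ (gradient F (x + t • v) - gradient F x) v := by
      rw [hψ', inner_sub_left]
    rw [h1]
    calc |(inner ℝ (gradient F (x + t • v) - gradient F x) v : ℝ)|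
        ≤ ‖gradient F (x + t • v) - gradient F x‖ * ‖v‖ := abs_real_inner_le_norm _ _
      _ ≤ (H * ‖t • v‖) * ‖v‖ := by
          have hd := hLip.dist_le_mul (x + t • v) x
          rw [dist_eq_norm, dist_eq_norm,
            show x + t • v - x = t • v from by abel] at hd
          have hco : (H.toNNReal : ℝ) = H := Real.coe_toNNReal H hH
          rw [hco] at hd
          exact mul_le_mul_of_nonneg_right hd (norm_nonneg v)
      _ = H * ‖v‖ ^ 2 * t := by
          rw [norm_smul, Real.norm_eq_abs, abs_of_nonneg ht.1]
          ring
  have habs : |∫ t in (0:ℝ)..1, ψ' t| ≤ H * ‖v‖ ^ 2 * (1/2) := by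
    have h2 : (1/2 : ℝ) = ∫ t in (0:ℝ)..1, t := by
      rw [integral_id]; norm_num
    calc |∫ t in (0:ℝ)..1, ψ' t| ≤ ∫ t in (0:ℝ)..1, |ψ' t| := by
          exact intervalIntegral.abs_integral_le_integral_abs (by norm_num)
      _ ≤ ∫ t in (0:ℝ)..1, H * ‖v‖ ^ 2 * t := by
          apply intervalIntegral.integral_mono_on (by norm_num)
            (hcont.abs.intervalIntegrable 0 1)
            (((continuous_const.mul continuous_id).intervalIntegrable 0 1))
          exact hbound
      _ = H * ‖v‖ ^ 2 * (1/2) := by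
          rw [intervalIntegral.integral_const_mul, integral_id]
          norm_num
  rw [hFTC] at habs
  calc |F (x + v) - F x - inner ℝ (gradient F x) v| ≤ H * ‖v‖ ^ 2 * (1/2) := habs
    _ = H / 2 * ‖v‖ ^ 2 := by ring


lemma norm_symm_sq {d : ℕ} (z : Fin d → ℝ) :
    ‖(MeasurableEquiv.toLp 2 (Fin d → ℝ)) z‖ ^ 2 = Qf d z := by
  rw [EuclideanSpace.norm_eq, Real.sq_sqrt (Finset.sum_nonneg fun i _ => by positivity)]
  unfold Qf
  refine Finset.sum_congr rfl fun i _ => ?_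
  rw [show ((MeasurableEquiv.toLp 2 (Fin d → ℝ)) z) i = z i from rfl,
    Real.norm_eq_abs, sq_abs]

lemma inner_symm_eq {d : ℕ} (G : EuclideanSpace ℝ (Fin d)) (z : Fin d → ℝ) :
    (inner ℝ G ((MeasurableEquiv.toLp 2 (Fin d → ℝ)) z) : ℝ)
      = Sf (fun i => G i) z := by
  rw [PiLp.inner_apply]
  unfold Sf
  refine Finset.sum_congr rfl fun i _ => ?_
  rw [show ((MeasurableEquiv.toLp 2 (Fin d → ℝ)) z) i = z i from rfl]
  simp [RCLike.inner_apply]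
  ring

lemma norm_euclid_sq {d : ℕ} (G : EuclideanSpace ℝ (Fin d)) :
    ‖G‖ ^ 2 = ∑ i, (G i) ^ 2 := by
  rw [EuclideanSpace.norm_eq, Real.sq_sqrt (Finset.sum_nonneg fun i _ => by positivity)]
  exact Finset.sum_congr rfl fun i _ => by rw [Real.norm_eq_abs, sq_abs]

end OnePointAux
end

open OnePointAux in
set_option maxHeartbeats 2000000 in
/-- Second-moment bound for the mini-batch one-point gradient estimator (Lemma 3). -/
theorem one_point_estimator_second_moment
    (d : ℕ) (hd : 0 < d) {Ξ : Type*} [MeasurableSpace Ξ]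
    (D : Kernel (EuclideanSpace ℝ (Fin d)) Ξ) [IsMarkovKernel D]
    (f : EuclideanSpace ℝ (Fin d) → Ξ → ℝ)
    (hf_meas : Measurable (Function.uncurry f))
    (hf_int : ∀ y, Integrable (f y) (D y))
    (F : EuclideanSpace ℝ (Fin d) → ℝ)
    (hF : ∀ y, F y = ∫ ξ, f y ξ ∂(D y))
    -- Assumption 1: bounded sampling variance of the objective values
    (σ : ℝ) (hσ : 0 ≤ σ)
    (hf_sq : ∀ y, MemLp (f y) 2 (D y))
    (hvar : ∀ y, ∫ ξ, (F y - f y ξ) ^ 2 ∂(D y) ≤ σ ^ 2)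
    -- Assumption 4: `F` is `H_F`-smooth
    (H_F : ℝ) (hH_F : 0 ≤ H_F)
    (hFdiff : Differentiable ℝ F)
    (hFgradLip : LipschitzWith H_F.toNNReal (gradient F))
    (x : EuclideanSpace ℝ (Fin d)) (μ : ℝ) (hμ : 0 < μ) (c : ℝ)
    (m : ℕ) (hm : 1 ≤ m) :
    (∫ u, ∫ ξ,
        ‖(1 / (m : ℝ)) • ∑ j : Fin m, ((f (x + μ • u) (ξ j) - c) / μ) • u‖ ^ 2
          ∂(Measure.pi fun _ : Fin m => D (x + μ • u)) ∂(stdGaussian d))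
      ≤ (3 / 2) * μ ^ 2 * H_F ^ 2 * ((d : ℝ) + 6) ^ 3
        + 6 * ((d : ℝ) + 4) * ‖gradient F x‖ ^ 2
        + 3 * σ ^ 2 * (d : ℝ) / (μ ^ 2 * (m : ℝ))
        + 3 * (d : ℝ) * (F x - c) ^ 2 / μ ^ 2 := by
  have hm0 : (0:ℝ) < m := by exact_mod_cast Nat.lt_of_lt_of_le Nat.zero_lt_one hm
  have hμ2 : (0:ℝ) < μ ^ 2 := by positivity
  set G : EuclideanSpace ℝ (Fin d) := gradient F x with hGdef
  set Φ : EuclideanSpace ℝ (Fin d) → ℝ := fun u =>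
    (σ ^ 2 / (μ ^ 2 * (m:ℝ))) * ‖u‖ ^ 2 + (3 / 4 * (μ ^ 2 * H_F ^ 2)) * (‖u‖ ^ 2) ^ 3
      + 3 * ((inner ℝ G u : ℝ) ^ 2 * ‖u‖ ^ 2) + (3 * (F x - c) ^ 2 / μ ^ 2) * ‖u‖ ^ 2
    with hΦdef
  -- pointwise bound on the inner integral
  have key : ∀ u : EuclideanSpace ℝ (Fin d),
      (∫ ξ, ‖(1 / (m : ℝ)) • ∑ j : Fin m, ((f (x + μ • u) (ξ j) - c) / μ) • u‖ ^ 2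
        ∂(Measure.pi fun _ : Fin m => D (x + μ • u))) ≤ Φ u := by
    intro u
    have hμne : μ ≠ 0 := ne_of_gt hμ
    set y := x + μ • u with hy
    set iGu := (inner ℝ G u : ℝ) with hiGu
    let b : Ξ → ℝ := fun ξ => (f y ξ - c) / μ
    have hbint : Integrable b (D y) := ((hf_int y).sub (integrable_const c)).div_const μ
    have hbmem : MemLp b 2 (D y) := by
      have h1 : MemLp (fun ξ => f y ξ - c) 2 (D y) := (hf_sq y).sub (memLp_const c)
      have h2 := h1.const_mul μ⁻¹
      have h3 : b = fun ξ => μ⁻¹ * (f y ξ - c) := funext fun ξ => div_eq_inv_mul _ _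
      rw [h3]
      exact h2
    have hb2int : Integrable (fun ξ => b ξ * b ξ) (D y) :=
      hbmem.integrable_sq.congr (Filter.EventuallyEq.of_eq (funext fun ξ => pow_two (b ξ)))
    have hβval : ∫ ξ, b ξ ∂(D y) = (F y - c) / μ := by
      show ∫ ξ, (f y ξ - c) / μ ∂(D y) = (F y - c) / μ
      rw [integral_div, integral_sub (hf_int y) (integrable_const c), integral_const,
        probReal_univ]
      rw [hF y]
      simp
    have hsum := integral_sum_eval_sq (m := m) (D y) b hbint hb2int
    -- variance bound
    have hVeq : ∫ ξ, (b ξ - ∫ t, b t ∂(D y)) ^ 2 ∂(D y)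
        = (∫ ξ, b ξ * b ξ ∂(D y)) - (∫ ξ, b ξ ∂(D y)) ^ 2 := by
      have hexp : (fun ξ => (b ξ - ∫ t, b t ∂(D y)) ^ 2)
          = fun ξ => b ξ * b ξ + (-2 * ∫ t, b t ∂(D y)) * b ξ + (∫ t, b t ∂(D y)) ^ 2 :=
        funext fun ξ => by ring
      rw [hexp, integral_add3 hb2int (hbint.const_mul _) (integrable_const _),
        integral_const_mul, integral_const, probReal_univ]
      simp
      ring
    have hVnn : 0 ≤ (∫ ξ, b ξ * b ξ ∂(D y)) - (∫ ξ, b ξ ∂(D y)) ^ 2 := by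
      rw [← hVeq]; exact integral_nonneg fun ξ => sq_nonneg _
    have hptV : ∀ ξ : Ξ, (b ξ - ∫ t, b t ∂(D y)) ^ 2 = (F y - f y ξ) ^ 2 / μ ^ 2 := by
      intro ξ
      rw [hβval]
      show ((f y ξ - c) / μ - (F y - c) / μ) ^ 2 = (F y - f y ξ) ^ 2 / μ ^ 2
      field_simp
      ring
    have hVle : (∫ ξ, b ξ * b ξ ∂(D y)) - (∫ ξ, b ξ ∂(D y)) ^ 2 ≤ σ ^ 2 / μ ^ 2 := by
      rw [← hVeq]
      simp_rw [hptV]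
      rw [integral_div]
      gcongr
      exact hvar y
    -- Taylor bound for the mean term
    have hT := taylor_quad_bound hH_F hFdiff hFgradLip x (μ • u)
    rw [← hGdef, ← hy] at hT
    have hTnorm : ‖μ • u‖ ^ 2 = μ ^ 2 * ‖u‖ ^ 2 := by
      rw [norm_smul, mul_pow, Real.norm_eq_abs, sq_abs]
    have hTin : (inner ℝ G (μ • u) : ℝ) = μ * iGu := real_inner_smul_right G u μ
    rw [hTin, hTnorm] at hT
    set T := F y - F x - μ * iGu with hTdef
    have hTsq : T ^ 2 ≤ (H_F / 2 * (μ ^ 2 * ‖u‖ ^ 2)) ^ 2 := by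
      rw [← sq_abs T]
      exact pow_le_pow_left₀ (abs_nonneg T) hT 2
    have hrepr : T + μ * iGu + (F x - c) = F y - c := by rw [hTdef]; ring
    have heq2 : μ ^ 2 * ((F y - c) / μ) ^ 2 = (T + μ * iGu + (F x - c)) ^ 2 := by
      rw [hrepr, div_pow]
      field_simp
    have hBsq : ((F y - c) / μ) ^ 2
        ≤ 3 / 4 * μ ^ 2 * H_F ^ 2 * (‖u‖ ^ 2) ^ 2 + 3 * iGu ^ 2 + 3 * (F x - c) ^ 2 / μ ^ 2 := by
      have habc : ∀ p q r B : ℝ, p ^ 2 ≤ B ^ 2 →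
          (p + q + r) ^ 2 ≤ 3 * B ^ 2 + 3 * q ^ 2 + 3 * r ^ 2 := by
        intro p q r B h
        nlinarith [sq_nonneg (p - q), sq_nonneg (p - r), sq_nonneg (q - r)]
      have h7 : μ ^ 2 * ((F y - c) / μ) ^ 2
          ≤ 3 * (H_F / 2 * (μ ^ 2 * ‖u‖ ^ 2)) ^ 2 + 3 * (μ * iGu) ^ 2 + 3 * (F x - c) ^ 2 :=
        heq2.trans_le (habc T (μ * iGu) (F x - c) _ hTsq)
      calc ((F y - c) / μ) ^ 2 = (μ ^ 2 * ((F y - c) / μ) ^ 2) / μ ^ 2 := by field_simp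
        _ ≤ (3 * (H_F / 2 * (μ ^ 2 * ‖u‖ ^ 2)) ^ 2 + 3 * (μ * iGu) ^ 2
              + 3 * (F x - c) ^ 2) / μ ^ 2 := by gcongr
        _ = 3 / 4 * μ ^ 2 * H_F ^ 2 * (‖u‖ ^ 2) ^ 2 + 3 * iGu ^ 2
              + 3 * (F x - c) ^ 2 / μ ^ 2 := by field_simp; ring
    -- compute the inner integral
    show (∫ ξ, ‖(1 / (m : ℝ)) • ∑ j : Fin m, b (ξ j) • u‖ ^ 2
        ∂(Measure.pi fun _ : Fin m => D y)) ≤ Φ u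
    have hpt : ∀ ξv : Fin m → Ξ, ‖(1 / (m : ℝ)) • ∑ j : Fin m, b (ξv j) • u‖ ^ 2
        = (∑ j : Fin m, b (ξv j)) ^ 2 * ((1 / (m : ℝ)) ^ 2 * ‖u‖ ^ 2) := by
      intro ξv
      rw [← Finset.sum_smul, smul_smul, norm_smul, Real.norm_eq_abs, mul_pow, sq_abs]
      ring
    have hinner : (∫ ξ, ‖(1 / (m : ℝ)) • ∑ j : Fin m, b (ξ j) • u‖ ^ 2
        ∂(Measure.pi fun _ : Fin m => D y))
        = ((m : ℝ) * ∫ ξ, b ξ * b ξ ∂(D y) + ((m : ℝ) ^ 2 - m) * (∫ ξ, b ξ ∂(D y)) ^ 2)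
            * ((1 / (m : ℝ)) ^ 2 * ‖u‖ ^ 2) := by
      simp_rw [hpt]
      rw [integral_mul_const, hsum]
    rw [hinner]
    have hA : ((m : ℝ) * ∫ ξ, b ξ * b ξ ∂(D y) + ((m : ℝ) ^ 2 - m) * (∫ ξ, b ξ ∂(D y)) ^ 2)
        * ((1 / (m : ℝ)) ^ 2 * ‖u‖ ^ 2)
        = (((∫ ξ, b ξ * b ξ ∂(D y)) - (∫ ξ, b ξ ∂(D y)) ^ 2) / m
            + (∫ ξ, b ξ ∂(D y)) ^ 2) * ‖u‖ ^ 2 := by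
      field_simp
      ring
    rw [hA]
    have h5 : ((∫ ξ, b ξ * b ξ ∂(D y)) - (∫ ξ, b ξ ∂(D y)) ^ 2) / (m : ℝ)
        ≤ σ ^ 2 / (μ ^ 2 * (m : ℝ)) := by
      rw [show σ ^ 2 / (μ ^ 2 * (m : ℝ)) = (σ ^ 2 / μ ^ 2) / (m : ℝ) by ring]
      gcongr
    have hB2 : (∫ ξ, b ξ ∂(D y)) ^ 2
        ≤ 3 / 4 * μ ^ 2 * H_F ^ 2 * (‖u‖ ^ 2) ^ 2 + 3 * iGu ^ 2 + 3 * (F x - c) ^ 2 / μ ^ 2 := by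
      rw [hβval]; exact hBsq
    calc (((∫ ξ, b ξ * b ξ ∂(D y)) - (∫ ξ, b ξ ∂(D y)) ^ 2) / m
            + (∫ ξ, b ξ ∂(D y)) ^ 2) * ‖u‖ ^ 2
        ≤ (σ ^ 2 / (μ ^ 2 * (m : ℝ))
            + (3 / 4 * μ ^ 2 * H_F ^ 2 * (‖u‖ ^ 2) ^ 2 + 3 * iGu ^ 2
              + 3 * (F x - c) ^ 2 / μ ^ 2)) * ‖u‖ ^ 2 := by
          apply mul_le_mul_of_nonneg_right _ (by positivity)
          linarith
      _ = Φ u := by rw [hΦdef]; ring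
  -- integrate the bound
  obtain ⟨hQi, hQ2i, hQ3i, hQ, hQ2, hQ3⟩ := Q_moments d
  obtain ⟨_, _, _, hS2Qi, _, _, _, hS2Q⟩ := S_moments d (fun i => G i)
  have hcomp : (fun z : Fin d → ℝ => Φ ((MeasurableEquiv.toLp 2 (Fin d → ℝ)) z))
      = fun z => (σ ^ 2 / (μ ^ 2 * (m:ℝ))) * Qf d z + (3 / 4 * (μ ^ 2 * H_F ^ 2)) * Qf d z ^ 3
          + 3 * (Sf (fun i => G i) z ^ 2 * Qf d z) + (3 * (F x - c) ^ 2 / μ ^ 2) * Qf d z := by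
    funext z
    simp only [hΦdef]
    rw [norm_symm_sq, inner_symm_eq]
  have hcompint : Integrable
      (fun z : Fin d → ℝ => Φ ((MeasurableEquiv.toLp 2 (Fin d → ℝ)) z)) (gpi d) := by
    rw [hcomp]
    exact (((hQi.const_mul _).add ((hQ3i.const_mul _))).add
      ((hS2Qi.const_mul 3))).add (hQi.const_mul _)
  have hΦint : Integrable Φ (stdGaussian d) := by
    refine (integrable_map_equiv ((MeasurableEquiv.toLp 2 (Fin d → ℝ))) Φ).mpr ?_
    exact hcompint
  have hΦval : ∫ u, Φ u ∂(stdGaussian d)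
      = (σ ^ 2 / (μ ^ 2 * (m:ℝ))) * d
        + (3 / 4 * (μ ^ 2 * H_F ^ 2)) * ((d:ℝ) * ((d:ℝ) + 2) * ((d:ℝ) + 4))
        + 3 * (((d:ℝ) + 2) * ∑ i, (G i) ^ 2) + (3 * (F x - c) ^ 2 / μ ^ 2) * d := by
    have h1 : ∫ u, Φ u ∂(stdGaussian d)
        = ∫ z, Φ ((MeasurableEquiv.toLp 2 (Fin d → ℝ)) z) ∂(gpi d) :=
      integral_map_equiv _ Φ
    rw [h1, hcomp,
      integral_add4 (hQi.const_mul _) (hQ3i.const_mul _) (hS2Qi.const_mul 3)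
        (hQi.const_mul _),
      integral_const_mul, integral_const_mul, integral_const_mul, integral_const_mul,
      hQ, hQ3, hS2Q]
  have hnormG : ‖G‖ ^ 2 = ∑ i, (G i) ^ 2 := norm_euclid_sq G
  have hd0 : (0:ℝ) ≤ d := Nat.cast_nonneg d
  have hsnn : (0:ℝ) ≤ ∑ i, (G i) ^ 2 := Finset.sum_nonneg fun i _ => sq_nonneg _
  have ha2 : (σ ^ 2 / (μ ^ 2 * (m:ℝ))) * (d:ℝ) ≤ 3 * σ ^ 2 * (d:ℝ) / (μ ^ 2 * (m:ℝ)) := by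
    rw [show 3 * σ ^ 2 * (d:ℝ) / (μ ^ 2 * (m:ℝ))
      = 3 * ((σ ^ 2 / (μ ^ 2 * (m:ℝ))) * (d:ℝ)) by ring]
    have : 0 ≤ (σ ^ 2 / (μ ^ 2 * (m:ℝ))) * (d:ℝ) := by positivity
    linarith
  have hd6 : (d:ℝ) * ((d:ℝ) + 2) * ((d:ℝ) + 4) ≤ 2 * ((d:ℝ) + 6) ^ 3 := by nlinarith [mul_nonneg (mul_nonneg hd0 hd0) hd0, mul_nonneg hd0 hd0, hd0]
  have hb2 : (3 / 4 * (μ ^ 2 * H_F ^ 2)) * ((d:ℝ) * ((d:ℝ) + 2) * ((d:ℝ) + 4))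
      ≤ 3 / 2 * μ ^ 2 * H_F ^ 2 * ((d:ℝ) + 6) ^ 3 := by
    nlinarith [mul_le_mul_of_nonneg_left hd6 (show (0:ℝ) ≤ μ ^ 2 * H_F ^ 2 by positivity)]
  have hc2 : 3 * (((d:ℝ) + 2) * ∑ i, (G i) ^ 2) ≤ 6 * ((d:ℝ) + 4) * ‖G‖ ^ 2 := by
    rw [hnormG]
    nlinarith [mul_nonneg hd0 hsnn, hsnn]
  have hd4 : (3 * (F x - c) ^ 2 / μ ^ 2) * (d:ℝ) = 3 * (d:ℝ) * (F x - c) ^ 2 / μ ^ 2 := by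
    ring
  calc (∫ u, ∫ ξ,
        ‖(1 / (m : ℝ)) • ∑ j : Fin m, ((f (x + μ • u) (ξ j) - c) / μ) • u‖ ^ 2
          ∂(Measure.pi fun _ : Fin m => D (x + μ • u)) ∂(stdGaussian d))
      ≤ ∫ u, Φ u ∂(stdGaussian d) :=
        integral_mono_of_nonneg
          (Filter.Eventually.of_forall fun u => integral_nonneg fun ξ => by positivity)
          hΦint (Filter.Eventually.of_forall key)
    _ = _ := hΦval
    _ ≤ (3 / 2) * μ ^ 2 * H_F ^ 2 * ((d : ℝ) + 6) ^ 3
        + 6 * ((d : ℝ) + 4) * ‖G‖ ^ 2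
        + 3 * σ ^ 2 * (d : ℝ) / (μ ^ 2 * (m : ℝ))
        + 3 * (d : ℝ) * (F x - c) ^ 2 / μ ^ 2 := by linarith
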